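/- Let m ≥ 2, α = [0; overline{1,m}], and γ a real number with ‖m·γ‖ ≠ 0. Then there exist constants c > 0 and η > 0 such that for every real θ and every integer k ≥ 2, |(1/q_k)·∑_{0≤u<q_k} e(γ·S_α(u) + θ·u)| ≤ η·e^{−c·k}. -/

import Mathlib

open Finset
open scoped Classical

/-- e(x) = exp(2πi x) -/
noncomputable def e (x : ℝ) : ℂ := Complex.exp (2 * Real.pi * Complex.I * x)

/-- Denominators of α = [0; 1, m, 1, m, ...]. -/
def ostq (m : ℕ) : ℕ → ℕ
  | 0 => 1
  | 1 => 1
  | (i+2) => (if (i+2) % 2 = 0 then m * ostq m (i+1) else ostq m (i+1)) + ostq m i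

/-- φ(m) = (m + 2 + √(m² + 4m))/2. -/
noncomputable def phi (m : ℕ) : ℝ := ((m : ℝ) + 2 + Real.sqrt ((m : ℝ)^2 + 4*m)) / 2

/-- Partial quotients of α = [0; 1, m, 1, m, ...] : a_j = m if j even, 1 if j odd. -/
def pq (m j : ℕ) : ℕ := if j % 2 = 0 then m else 1

/-- Markov condition on digit sequences. -/
def Markov (m : ℕ) (ε : ℕ → ℕ) : Prop :=
  ε 0 < pq m 1 ∧ ∀ i, 1 ≤ i → ε i ≤ pq m (i+1) ∧ (ε i = pq m (i+1) → ε (i-1) = 0)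

/-- ε is the (finitely supported) Ostrowski digit sequence of n. -/
def IsOstRep (m n : ℕ) (ε : ℕ → ℕ) : Prop :=
  Markov m ε ∧ ∃ K, (∀ j, K ≤ j → ε j = 0) ∧ n = ∑ i ∈ Finset.range K, ε i * ostq m i

/-- The Ostrowski digits of n. -/
noncomputable def ostEps (m n : ℕ) : ℕ → ℕ :=
  if h : ∃ ε, IsOstRep m n ε then h.choose else fun _ => 0

/-- Ostrowski sum-of-digits function S_α. -/
noncomputable def Sfull (m n : ℕ) : ℕ := ∑ᶠ i, ostEps m n i

/-- Truncated Ostrowski sum-of-digits function S_{α,k}. -/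
noncomputable def Strunc (m k n : ℕ) : ℕ := ∑ i ∈ Finset.range k, ostEps m n i

/-- Distance to the nearest integer. -/
noncomputable def nint (x : ℝ) : ℝ := |x - round x|

section Work
variable {m : ℕ}

lemma pq_pos (hm : 2 ≤ m) (j : ℕ) : 1 ≤ pq m j := by
  unfold pq; split <;> omega

lemma pq_le (hm : 2 ≤ m) (j : ℕ) : pq m j ≤ m := by
  unfold pq; split <;> omega

lemma pq_one : pq m 1 = 1 := by simp [pq]

lemma ostq_rec (k : ℕ) : ostq m (k+2) = pq m (k+2) * ostq m (k+1) + ostq m k := by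
  show (if (k+2) % 2 = 0 then m * ostq m (k+1) else ostq m (k+1)) + ostq m k = _
  unfold pq; split <;> ring

lemma ostq_pos (k : ℕ) : 0 < ostq m k := by
  induction k using Nat.strong_induction_on with
  | _ k ih =>
    match k with
    | 0 => exact Nat.one_pos
    | 1 => exact Nat.one_pos
    | (k+2) =>
      rw [ostq_rec]
      have := ih k (by omega)
      positivity

lemma ostq_mono_succ (hm : 2 ≤ m) (k : ℕ) : ostq m k ≤ ostq m (k+1) := by
  match k with
  | 0 => exact le_refl _
  | (k+1) =>
    rw [ostq_rec]
    have h1 := pq_pos hm (k+2)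
    have h2 := ostq_pos (m := m) (k+1)
    nlinarith

lemma ostq_mono (hm : 2 ≤ m) : Monotone (ostq m) :=
  monotone_nat_of_le_succ (ostq_mono_succ hm)

lemma ostq_succ_le (hm : 2 ≤ m) (k : ℕ) : ostq m (k+1) ≤ (m+1) * ostq m k := by
  match k with
  | 0 => show 1 ≤ (m+1)*1; omega
  | (k+1) =>
    rw [ostq_rec]
    have h1 := pq_le hm (k+2)
    have h2 := ostq_pos (m := m) k
    have h3 := ostq_mono hm (show k ≤ k+1 by omega)
    nlinarith

/-- Markov digit strings have partial sums below `q_K`. -/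
lemma markov_sum_lt (hm : 2 ≤ m) {ε : ℕ → ℕ} (hε : Markov m ε) (K : ℕ) :
    ∑ i ∈ Finset.range K, ε i * ostq m i < ostq m K := by
  induction K using Nat.strong_induction_on with
  | _ K ih =>
    match K with
    | 0 => simpa using ostq_pos 0
    | 1 =>
      have h0 : ε 0 = 0 := by have := hε.1; rw [pq_one] at this; omega
      simpa [h0] using ostq_pos 1
    | (K+2) =>
      rw [Finset.sum_range_succ, ostq_rec]
      have hcap : ε (K+1) ≤ pq m (K+2) := (hε.2 (K+1) (by omega)).1
      have hcar : ε (K+1) = pq m (K+2) → ε K = 0 := fun h => by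
        simpa using (hε.2 (K+1) (by omega)).2 h
      rcases eq_or_lt_of_le hcap with hEq | hLt
      · have hK0 : ε K = 0 := hcar hEq
        have hKs : ∑ i ∈ Finset.range (K+1), ε i * ostq m i
            = ∑ i ∈ Finset.range K, ε i * ostq m i := by
          rw [Finset.sum_range_succ, hK0]; simp
        rw [hKs, hEq]
        have := ih K (by omega)
        omega
      · have h1 := ih (K+1) (by omega)
        have h3 : ε (K+1) * ostq m (K+1) ≤ (pq m (K+2) - 1) * ostq m (K+1) :=
          Nat.mul_le_mul_right _ (by omega)
        have h4 := pq_pos hm (K+2)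
        have h5 := ostq_pos (m := m) (K+1)
        have h6 : (pq m (K+2) - 1) * ostq m (K+1) + ostq m (K+1)
            = pq m (K+2) * ostq m (K+1) := by
          cases' Nat.exists_eq_add_of_le h4 with c hc
          rw [hc, Nat.add_sub_cancel_left]; ring
        omega
lemma rep_sum_ext {ε : ℕ → ℕ} {K K' : ℕ} (h0 : ∀ j, K ≤ j → ε j = 0) (hKK : K ≤ K')
    (f : ℕ → ℕ) : ∑ i ∈ Finset.range K', ε i * f i = ∑ i ∈ Finset.range K, ε i * f i := by
  apply (Finset.sum_subset (Finset.range_subset_range.2 hKK) _).symm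
  intro i _ hi
  rw [h0 i (by simpa using hi)]; ring

lemma rep_support (hm : 2 ≤ m) {n t : ℕ} {ε : ℕ → ℕ} (h : IsOstRep m n ε)
    (hn : n < ostq m t) : ∀ i, t ≤ i → ε i = 0 := by
  obtain ⟨hM, K, hK0, hval⟩ := h
  intro i hi
  by_cases hiK : K ≤ i
  · exact hK0 i hiK
  · by_contra hne
    have h1 : 1 ≤ ε i := Nat.one_le_iff_ne_zero.2 hne
    have h2 : ostq m i ≤ ε i * ostq m i := Nat.le_mul_of_pos_left _ h1
    have h3 : ε i * ostq m i ≤ n := by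
      rw [hval]
      exact Finset.single_le_sum (f := fun i => ε i * ostq m i)
        (fun _ _ => Nat.zero_le _) (Finset.mem_range.2 (by omega))
    have h4 : ostq m t ≤ ostq m i := ostq_mono hm hi
    omega

lemma aux_lt (hm : 2 ≤ m) {ε ε' : ℕ → ℕ} (hε' : Markov m ε') (N : ℕ)
    (h : ε' N < ε N) :
    ∑ i ∈ Finset.range (N+1), ε' i * ostq m i < ∑ i ∈ Finset.range (N+1), ε i * ostq m i := by
  rw [Finset.sum_range_succ, Finset.sum_range_succ]
  have h1 := markov_sum_lt hm hε' N
  have h2 : (ε' N + 1) * ostq m N ≤ ε N * ostq m N := Nat.mul_le_mul_right _ (by omega)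
  have h3 : (0:ℕ) ≤ ∑ i ∈ Finset.range N, ε i * ostq m i := Nat.zero_le _
  nlinarith

lemma sum_eq_digits (hm : 2 ≤ m) {ε ε' : ℕ → ℕ} (hε : Markov m ε) (hε' : Markov m ε') :
    ∀ N, (∑ i ∈ Finset.range N, ε i * ostq m i = ∑ i ∈ Finset.range N, ε' i * ostq m i) →
      ∀ i, i < N → ε i = ε' i := by
  intro N
  induction N with
  | zero => intro _ i hi; omega
  | succ N ih =>
    intro hsum i hi
    have htop : ε N = ε' N := by
      rcases lt_trichotomy (ε N) (ε' N) with h | h | h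
      · have := aux_lt hm hε N h; omega
      · exact h
      · have := aux_lt hm hε' N h; omega
    rcases Nat.lt_succ_iff_lt_or_eq.1 hi with hi' | rfl
    · apply ih _ _ hi'
      rw [Finset.sum_range_succ, Finset.sum_range_succ, htop] at hsum
      omega
    · exact htop

lemma rep_unique (hm : 2 ≤ m) {n : ℕ} {ε ε' : ℕ → ℕ}
    (h : IsOstRep m n ε) (h' : IsOstRep m n ε') : ε = ε' := by
  obtain ⟨hM, K, hK0, hval⟩ := h
  obtain ⟨hM', K', hK0', hval'⟩ := h'
  funext i
  by_cases hi : i < max K K'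
  · apply sum_eq_digits hm hM hM' (max K K') _ i hi
    rw [rep_sum_ext hK0 (le_max_left _ _), rep_sum_ext hK0' (le_max_right _ _), ← hval, ← hval']
  · rw [hK0 i (by omega), hK0' i (by omega)]

/-- Core construction: add digit `j` at position `k+1` to a representation supported below `k+1`. -/
lemma rep_step (hm : 2 ≤ m) {v : ℕ} {ε : ℕ → ℕ} (hrep : IsOstRep m v ε) {k j : ℕ}
    (hsupp : ∀ i, k+1 ≤ i → ε i = 0) (hj : j ≤ pq m (k+2)) (hcar : j = pq m (k+2) → ε k = 0) :
    IsOstRep m (j * ostq m (k+1) + v) (Function.update ε (k+1) j) := by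
  obtain ⟨hM, K, hK0, hval⟩ := hrep
  have hpq1 := pq_pos hm
  constructor
  · constructor
    · rw [Function.update_of_ne (by omega)]
      exact hM.1
    · intro i hi
      by_cases hik : i = k+1
      · subst hik
        rw [Function.update_self]
        refine ⟨hj, fun hjj => ?_⟩
        rw [Function.update_of_ne (by omega)]
        exact hcar hjj
      · rw [Function.update_of_ne hik]
        refine ⟨(hM.2 i hi).1, fun hii => ?_⟩
        by_cases hik' : i - 1 = k + 1
        · exfalso
          have : ε i = 0 := hsupp i (by omega)
          have := hpq1 (i+1)
          omega
        · rw [Function.update_of_ne hik']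
          exact (hM.2 i hi).2 hii
  · refine ⟨max K (k+2), fun i hi => ?_, ?_⟩
    · rw [Function.update_of_ne (by omega)]
      exact hK0 i (by omega)
    · have hmem : k + 1 ∈ Finset.range (max K (k+2)) := Finset.mem_range.2 (by omega)
      have hsc : ∑ x ∈ (Finset.range (max K (k+2))).erase (k+1),
            Function.update ε (k+1) j x * ostq m x
          = ∑ x ∈ (Finset.range (max K (k+2))).erase (k+1), ε x * ostq m x :=
        Finset.sum_congr rfl (fun i hi => by
          rw [Function.update_of_ne (Finset.ne_of_mem_erase hi)])
      have h0 : ε (k+1) = 0 := hsupp (k+1) (le_refl _)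
      have : ∑ i ∈ Finset.range (max K (k+2)), Function.update ε (k+1) j i * ostq m i
          = j * ostq m (k+1) + ∑ i ∈ Finset.range (max K (k+2)), ε i * ostq m i := by
        rw [← Finset.add_sum_erase _ (fun i => Function.update ε (k+1) j i * ostq m i) hmem,
          Function.update_self, hsc,
          ← Finset.add_sum_erase _ (fun i => ε i * ostq m i) hmem, h0]
        ring
      rw [this, rep_sum_ext hK0 (le_max_left _ _), ← hval]

lemma zero_rep (hm : 2 ≤ m) : IsOstRep m 0 (fun _ => 0) := by
  refine ⟨⟨?_, fun i hi => ⟨Nat.zero_le _, fun h => rfl⟩⟩, 0, fun j _ => rfl, by simp⟩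
  show (0:ℕ) < pq m 1
  rw [pq_one]; omega

lemma ostq_lt_self (hm : 2 ≤ m) : ∀ k, k < ostq m (k+1) := by
  intro k
  induction k with
  | zero => exact Nat.one_pos
  | succ k ih =>
    rw [ostq_rec]
    have h1 := pq_pos hm (k+2)
    have h2 := ostq_pos (m := m) k
    nlinarith

lemma exists_rep_lt (hm : 2 ≤ m) : ∀ k n, n < ostq m k → ∃ ε, IsOstRep m n ε := by
  intro k
  induction k using Nat.strong_induction_on with
  | _ k ih =>
    match k with
    | 0 =>
      intro n hn
      have h1 : ostq m 0 = 1 := rfl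
      have hn0 : n = 0 := by omega
      exact hn0 ▸ ⟨_, zero_rep hm⟩
    | 1 =>
      intro n hn
      have h1 : ostq m 1 = 1 := rfl
      have hn0 : n = 0 := by omega
      exact hn0 ▸ ⟨_, zero_rep hm⟩
    | (k+2) =>
      intro n hn
      rw [ostq_rec] at hn
      by_cases hcase : n < pq m (k+2) * ostq m (k+1)
      · -- j := n / q_{k+1} < pq, v := n % q_{k+1}
        set j := n / ostq m (k+1) with hj
        set v := n % ostq m (k+1) with hv
        have hq1 := ostq_pos (m := m) (k+1)
        have hvlt : v < ostq m (k+1) := Nat.mod_lt _ hq1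
        have hjlt : j < pq m (k+2) := by
          rw [hj]
          exact Nat.div_lt_of_lt_mul (by rw [Nat.mul_comm]; omega)
        obtain ⟨ε, hε⟩ := ih (k+1) (by omega) v hvlt
        refine ⟨Function.update ε (k+1) j, ?_⟩
        have hsupp := rep_support hm hε hvlt
        have := rep_step hm hε hsupp (le_of_lt hjlt) (fun h => absurd h (by omega))
        have hnv : j * ostq m (k+1) + v = n := by
          rw [hj, hv, Nat.mul_comm]
          exact Nat.div_add_mod n (ostq m (k+1))
        rwa [hnv] at this
      · set j := pq m (k+2) with hj
        set v := n - j * ostq m (k+1) with hv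
        have hvlt : v < ostq m k := by omega
        obtain ⟨ε, hε⟩ := ih k (by omega) v hvlt
        have hsupp : ∀ i, k+1 ≤ i → ε i = 0 := by
          intro i hi
          exact rep_support hm hε hvlt i (by omega)
        have hεk : ε k = 0 := rep_support hm hε hvlt k (le_refl _)
        refine ⟨Function.update ε (k+1) j, ?_⟩
        have := rep_step hm hε (fun i hi => hsupp i hi) (le_refl _) (fun _ => hεk)
        have hnv : j * ostq m (k+1) + v = n := by omega
        rwa [hnv] at this

lemma exists_rep (hm : 2 ≤ m) (n : ℕ) : ∃ ε, IsOstRep m n ε :=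
  exists_rep_lt hm (n+1) n (ostq_lt_self hm n)

lemma ostEps_spec (hm : 2 ≤ m) (n : ℕ) : IsOstRep m n (ostEps m n) := by
  unfold ostEps
  rw [dif_pos (exists_rep hm n)]
  exact (exists_rep hm n).choose_spec

lemma ostEps_eq (hm : 2 ≤ m) {n : ℕ} {ε : ℕ → ℕ} (h : IsOstRep m n ε) : ostEps m n = ε :=
  rep_unique hm (ostEps_spec hm n) h

lemma Sfull_eq_sum (hm : 2 ≤ m) {n K : ℕ} {ε : ℕ → ℕ} (h : IsOstRep m n ε)
    (hK : ∀ j, K ≤ j → ε j = 0) : Sfull m n = ∑ i ∈ Finset.range K, ε i := by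
  unfold Sfull
  rw [ostEps_eq hm h]
  apply finsum_eq_sum_of_support_subset
  intro i hi
  simp only [Function.mem_support] at hi
  simp only [Finset.coe_range, Set.mem_Iio]
  by_contra hc
  exact hi (hK i (by omega))
/-! ### Block decomposition of Sfull -/

lemma Sfull_block (hm : 2 ≤ m) (k j v : ℕ) (hj : j ≤ pq m (k+2))
    (hv : v < if j = pq m (k+2) then ostq m k else ostq m (k+1)) :
    Sfull m (j * ostq m (k+1) + v) = j + Sfull m v := by
  have hε := ostEps_spec hm v
  set ε := ostEps m v with hεdef
  have hv1 : v < ostq m (k+1) := by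
    split_ifs at hv with h
    · exact lt_of_lt_of_le hv (ostq_mono hm (by omega))
    · exact hv
  have hsupp : ∀ i, k+1 ≤ i → ε i = 0 := rep_support hm hε hv1
  have hcar : j = pq m (k+2) → ε k = 0 := by
    intro h
    rw [if_pos h] at hv
    exact rep_support hm hε hv k (le_refl _)
  have hrep' := rep_step hm hε hsupp hj hcar
  have hs1 : Sfull m (j * ostq m (k+1) + v)
      = ∑ i ∈ Finset.range (k+2), Function.update ε (k+1) j i := by
    apply Sfull_eq_sum hm hrep'
    intro i hi
    rw [Function.update_of_ne (by omega)]
    exact hsupp i (by omega)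
  have hs2 : Sfull m v = ∑ i ∈ Finset.range (k+1), ε i := Sfull_eq_sum hm hε hsupp
  rw [hs1, hs2, Finset.sum_range_succ, Function.update_self]
  have : ∑ i ∈ Finset.range (k+1), Function.update ε (k+1) j i
      = ∑ i ∈ Finset.range (k+1), ε i := by
    apply Finset.sum_congr rfl
    intro i hi
    rw [Function.update_of_ne (by simp at hi; omega)]
  rw [this]; ring

/-! ### The exponential sums -/

lemma e_add (x y : ℝ) : e (x + y) = e x * e y := by
  unfold e
  rw [← Complex.exp_add]
  congr 1
  push_cast
  ring

lemma norm_e (x : ℝ) : ‖e x‖ = 1 := by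
  unfold e
  rw [Complex.norm_exp]
  have : (2 * (Real.pi:ℂ) * Complex.I * (x:ℝ)).re = 0 := by
    simp [Complex.mul_re, Complex.mul_im]
  rw [this, Real.exp_zero]

noncomputable def T (m : ℕ) (γ θ : ℝ) (k : ℕ) : ℂ :=
  ∑ u ∈ Finset.range (ostq m k), e (γ * (Sfull m u : ℝ) + θ * (u : ℝ))

lemma sum_range_mul {M : Type*} [AddCommMonoid M] (f : ℕ → M) (a b : ℕ) :
    ∑ u ∈ Finset.range (a * b), f u = ∑ j ∈ Finset.range a, ∑ v ∈ Finset.range b, f (j * b + v) := by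
  induction a with
  | zero => simp
  | succ a ih =>
    have : (a+1) * b = a * b + b := by ring
    rw [this, Finset.sum_range_add, ih, Finset.sum_range_succ]

lemma T_rec (hm : 2 ≤ m) (γ θ : ℝ) (k : ℕ) :
    T m γ θ (k+2) =
      (∑ j ∈ Finset.range (pq m (k+2)), e ((j:ℝ) * (γ + θ * (ostq m (k+1) : ℝ)))) * T m γ θ (k+1)
      + e ((pq m (k+2) : ℝ) * (γ + θ * (ostq m (k+1) : ℝ))) * T m γ θ k := by
  have key : ∀ j v : ℕ, j ≤ pq m (k+2) →
      (v < if j = pq m (k+2) then ostq m k else ostq m (k+1)) →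
      e (γ * (Sfull m (j * ostq m (k+1) + v) : ℝ) + θ * ((j * ostq m (k+1) + v : ℕ) : ℝ))
        = e ((j:ℝ) * (γ + θ * (ostq m (k+1) : ℝ))) * e (γ * (Sfull m v : ℝ) + θ * (v : ℝ)) := by
    intro j v hj hv
    rw [Sfull_block hm k j v hj hv, ← e_add]
    congr 1
    push_cast
    ring
  show (∑ u ∈ Finset.range (ostq m (k+2)), _) = _
  rw [ostq_rec, Finset.sum_range_add, sum_range_mul]
  congr 1
  · rw [Finset.sum_mul]
    apply Finset.sum_congr rfl
    intro j hj
    rw [Finset.mem_range] at hj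
    rw [T, Finset.mul_sum]
    apply Finset.sum_congr rfl
    intro v hvmem
    rw [Finset.mem_range] at hvmem
    exact key j v (le_of_lt hj) (by rw [if_neg (by omega)]; exact hvmem)
  · rw [T, Finset.mul_sum]
    apply Finset.sum_congr rfl
    intro v hvmem
    rw [Finset.mem_range] at hvmem
    exact key (pq m (k+2)) v (le_refl _) (by rw [if_pos rfl]; exact hvmem)

lemma norm_T_le (k : ℕ) (γ θ : ℝ) : ‖T m γ θ k‖ ≤ (ostq m k : ℝ) := by
  refine le_trans (norm_sum_le _ _) ?_
  have : ∀ u ∈ Finset.range (ostq m k), ‖e (γ * (Sfull m u : ℝ) + θ * (u : ℝ))‖ = 1 :=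
    fun u _ => norm_e _
  rw [Finset.sum_congr rfl this]
  simp

/-! ### nint facts -/

lemma nint_nonneg (x : ℝ) : 0 ≤ nint x := abs_nonneg _

lemma nint_le_half (x : ℝ) : nint x ≤ 1/2 := abs_sub_round x

lemma nint_le_abs_sub (x : ℝ) (z : ℤ) : nint x ≤ |x - z| := round_le x z

lemma nint_add_le (x y : ℝ) : nint (x + y) ≤ nint x + nint y := by
  have h := nint_le_abs_sub (x + y) (round x + round y)
  refine le_trans h ?_
  push_cast
  rw [show x + y - ((round x : ℝ) + (round y : ℝ))
      = (x - round x) + (y - round y) by ring]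
  exact le_trans (abs_add_le _ _) (le_refl _)

lemma nint_neg_le (x : ℝ) : nint (-x) ≤ nint x := by
  refine le_trans (nint_le_abs_sub (-x) (-round x)) ?_
  push_cast
  rw [show -x - -(round x : ℝ) = -(x - round x) by ring, abs_neg]
  exact le_refl _

lemma nint_neg (x : ℝ) : nint (-x) = nint x :=
  le_antisymm (nint_neg_le x) (by simpa using nint_neg_le (-x))

lemma nint_sub_le (x y : ℝ) : nint (x - y) ≤ nint x + nint y := by
  rw [sub_eq_add_neg]
  exact le_trans (nint_add_le x (-y)) (by rw [nint_neg])

lemma nint_nsmul_le (n : ℕ) (x : ℝ) : nint ((n:ℝ) * x) ≤ (n:ℝ) * nint x := by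
  induction n with
  | zero => simp [nint]
  | succ n ih =>
    push_cast
    rw [add_mul, one_mul, add_mul, one_mul]
    exact le_trans (nint_add_le _ _) (by linarith)

/-! ### The trigonometric bound -/

lemma cos_bound (x : ℝ) : |Real.cos (Real.pi * x)| ≤ 1 - 2 * nint x ^ 2 := by
  have hpi := Real.pi_pos
  set s := x - round x with hs
  have hx : Real.pi * x = Real.pi * s + (round x : ℝ) * Real.pi := by rw [hs]; ring
  rw [hx, Real.cos_add_int_mul_pi, abs_mul]
  have habs1 : |((-1:ℝ)) ^ (round x)| = 1 := by
    rcases Int.even_or_odd (round x) with h | h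
    · rw [h.neg_one_zpow]; norm_num
    · rw [h.neg_one_zpow]; norm_num
  rw [habs1, one_mul]
  have habs : Real.cos (Real.pi * s) = Real.cos (Real.pi * |s|) := by
    rcases abs_choice s with h | h
    · rw [h]
    · rw [h]; rw [show Real.pi * -s = -(Real.pi * s) by ring, Real.cos_neg]
  rw [habs]
  set t := |s| with ht
  have ht0 : 0 ≤ t := abs_nonneg _
  have ht2 : t ≤ 1/2 := abs_sub_round x
  have hnint : nint x = t := rfl
  have hcosnn : 0 ≤ Real.cos (Real.pi * t) := by
    apply Real.cos_nonneg_of_mem_Icc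
    constructor <;> nlinarith
  rw [abs_of_nonneg hcosnn, hnint]
  -- cos (π t) = 1 - 2 sin(π t / 2)^2
  have hhalf : Real.sin (Real.pi * t / 2) ^ 2 = 1/2 - Real.cos (Real.pi * t) / 2 := by
    have h := Real.sin_sq_eq_half_sub (Real.pi * t / 2)
    rw [show 2 * (Real.pi * t / 2) = Real.pi * t by ring] at h
    exact h
  -- Jordan: sin(π t/2) ≥ t
  have hj : t ≤ Real.sin (Real.pi * t / 2) := by
    have := Real.mul_le_sin (x := Real.pi * t / 2) (by positivity) (by nlinarith)
    calc t = 2 / Real.pi * (Real.pi * t / 2) := by field_simp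
      _ ≤ Real.sin (Real.pi * t / 2) := this
  nlinarith [sq_nonneg (Real.sin (Real.pi * t / 2) - t)]

lemma norm_one_add_e (x : ℝ) : ‖1 + e x‖ ≤ 2 - 4 * nint x ^ 2 := by
  have hinv : Complex.exp ((Real.pi:ℂ) * (x:ℝ) * Complex.I)
      * Complex.exp (-((Real.pi:ℂ) * (x:ℝ)) * Complex.I) = 1 := by
    rw [← Complex.exp_add,
      show ((Real.pi:ℂ) * (x:ℝ) * Complex.I) + (-((Real.pi:ℂ) * (x:ℝ)) * Complex.I) = 0 by ring,
      Complex.exp_zero]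
  have hw : Complex.exp (2 * (Real.pi:ℂ) * Complex.I * (x:ℝ))
      = Complex.exp ((Real.pi:ℂ) * (x:ℝ) * Complex.I)
        * Complex.exp ((Real.pi:ℂ) * (x:ℝ) * Complex.I) := by
    rw [← Complex.exp_add]; congr 1; ring
  have key : (1 : ℂ) + e x
      = Complex.exp ((Real.pi:ℂ) * (x:ℝ) * Complex.I)
        * (2 * Complex.cos ((Real.pi:ℂ) * (x:ℝ))) := by
    rw [Complex.cos]
    unfold e
    rw [hw, show Complex.exp ((Real.pi:ℂ) * (x:ℝ) * Complex.I) *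
        (2 * ((Complex.exp ((Real.pi:ℂ) * (x:ℝ) * Complex.I)
          + Complex.exp (-((Real.pi:ℂ) * (x:ℝ)) * Complex.I))/2))
      = Complex.exp ((Real.pi:ℂ) * (x:ℝ) * Complex.I)
          * Complex.exp ((Real.pi:ℂ) * (x:ℝ) * Complex.I)
        + Complex.exp ((Real.pi:ℂ) * (x:ℝ) * Complex.I)
          * Complex.exp (-((Real.pi:ℂ) * (x:ℝ)) * Complex.I) by ring, hinv]
    ring
  rw [key, norm_mul]
  have h1 : ‖Complex.exp ((Real.pi : ℂ) * (x:ℝ) * Complex.I)‖ = 1 := by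
    rw [Complex.norm_exp]
    have : ((Real.pi : ℂ) * (x:ℝ) * Complex.I).re = 0 := by
      simp [Complex.mul_re, Complex.mul_im]
    rw [this, Real.exp_zero]
  have h2 : Complex.cos ((Real.pi:ℂ) * (x:ℝ)) = ((Real.cos (Real.pi * x) : ℝ) : ℂ) := by
    push_cast
    ring_nf
  rw [h1, one_mul, norm_mul, h2, Complex.norm_real, Real.norm_eq_abs]
  have := cos_bound x
  have h4 : ‖(2:ℂ)‖ = 2 := by norm_num
  rw [h4]
  nlinarith [nint_nonneg x, sq_nonneg (nint x)]

lemma norm_geom_bound (hm : 2 ≤ m) (x : ℝ) :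
    ‖∑ j ∈ Finset.range m, e ((j:ℝ) * x)‖ ≤ (m:ℝ) - 4 * nint x ^ 2 := by
  have hsplit : (Finset.range m) = Finset.range 2 ∪ Finset.Ico 2 m := by
    rw [Finset.range_eq_Ico]
    ext i
    simp only [Finset.mem_Ico, Finset.mem_union, Finset.mem_range]
    omega
  rw [hsplit, Finset.sum_union (by
    rw [Finset.range_eq_Ico]
    apply Finset.Ico_disjoint_Ico_consecutive)]
  refine le_trans (norm_add_le _ _) ?_
  have h1 : ∑ j ∈ Finset.range 2, e ((j:ℝ) * x) = 1 + e x := by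
    have e0 : e 0 = 1 := by unfold e; simp
    rw [Finset.sum_range_succ, Finset.sum_range_one]
    push_cast
    rw [zero_mul, one_mul, e0]
  have h2 : ‖∑ j ∈ Finset.Ico 2 m, e ((j:ℝ) * x)‖ ≤ ((m:ℝ) - 2) := by
    refine le_trans (norm_sum_le _ _) ?_
    have hone : ∀ j ∈ Finset.Ico 2 m, ‖e ((j:ℝ) * x)‖ = (1:ℝ) := fun j _ => norm_e _
    rw [Finset.sum_congr rfl hone, Finset.sum_const, Nat.card_Ico,
      nsmul_eq_mul, mul_one, Nat.cast_sub hm]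
    push_cast
    exact le_refl _
  have h3 := norm_one_add_e x
  rw [h1]
  linarith

/-! ### Norm recurrences -/

lemma norm_esum_le (a : ℕ) (x : ℝ) : ‖∑ j ∈ Finset.range a, e ((j:ℝ) * x)‖ ≤ (a:ℝ) := by
  refine le_trans (norm_sum_le _ _) ?_
  have hone : ∀ j ∈ Finset.range a, ‖e ((j:ℝ) * x)‖ = (1:ℝ) := fun j _ => norm_e _
  rw [Finset.sum_congr rfl hone, Finset.sum_const, nsmul_eq_mul, mul_one, Finset.card_range]

lemma norm_T_rec (hm : 2 ≤ m) (γ θ : ℝ) (k : ℕ) :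
    ‖T m γ θ (k+2)‖ ≤ (pq m (k+2) : ℝ) * ‖T m γ θ (k+1)‖ + ‖T m γ θ k‖ := by
  rw [T_rec hm]
  refine le_trans (norm_add_le _ _) ?_
  rw [norm_mul, norm_mul, norm_e, one_mul]
  have h1 := norm_esum_le (pq m (k+2)) (γ + θ * (ostq m (k+1) : ℝ))
  have h2 : (0:ℝ) ≤ ‖T m γ θ (k+1)‖ := norm_nonneg _
  nlinarith

lemma pq_even {k : ℕ} (hk : k % 2 = 0) : pq m k = m := by
  unfold pq
  rw [if_pos hk]

lemma norm_T_rec_even (hm : 2 ≤ m) (γ θ : ℝ) (k : ℕ) (hk : k % 2 = 0) :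
    ‖T m γ θ (k+2)‖ ≤ ((m:ℝ) - 4 * nint (γ + θ * (ostq m (k+1) : ℝ)) ^ 2) * ‖T m γ θ (k+1)‖
      + ‖T m γ θ k‖ := by
  rw [T_rec hm]
  refine le_trans (norm_add_le _ _) ?_
  rw [norm_mul, norm_mul, norm_e, one_mul]
  have hpq : pq m (k+2) = m := pq_even (by omega)
  rw [hpq]
  have h1 := norm_geom_bound hm (γ + θ * (ostq m (k+1) : ℝ))
  have h2 : (0:ℝ) ≤ ‖T m γ θ (k+1)‖ := norm_nonneg _
  nlinarith

/-! ### Diophantine: three consecutive odd denominators -/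

lemma ostq_identity (hm : 2 ≤ m) (t : ℕ) :
    (m+2) * ostq m (2*t+3) = ostq m (2*t+5) + ostq m (2*t+1) := by
  have e3 : ostq m (2*t+3) = pq m (2*t+3) * ostq m (2*t+2) + ostq m (2*t+1) := ostq_rec _
  have e4 : ostq m (2*t+4) = pq m (2*t+4) * ostq m (2*t+3) + ostq m (2*t+2) := ostq_rec _
  have e5 : ostq m (2*t+5) = pq m (2*t+5) * ostq m (2*t+4) + ostq m (2*t+3) := ostq_rec _
  have p3 : pq m (2*t+3) = 1 := by unfold pq; rw [if_neg (by omega)]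
  have p4 : pq m (2*t+4) = m := pq_even (by omega)
  have p5 : pq m (2*t+5) = 1 := by unfold pq; rw [if_neg (by omega)]
  rw [p3, one_mul] at e3
  rw [p4] at e4
  rw [p5, one_mul] at e5
  have hx : (m+2) * ostq m (2*t+3) = m * ostq m (2*t+3) + 2 * ostq m (2*t+3) := by ring
  omega

lemma dioph (hm : 2 ≤ m) (γ θ : ℝ) (t : ℕ) :
    nint ((m:ℝ) * γ) ≤ ((m:ℝ) + 4) *
      max (nint (γ + θ * (ostq m (2*t+1) : ℝ)))
        (max (nint (γ + θ * (ostq m (2*t+3) : ℝ))) (nint (γ + θ * (ostq m (2*t+5) : ℝ)))) := by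
  set y0 := γ + θ * (ostq m (2*t+1) : ℝ)
  set y1 := γ + θ * (ostq m (2*t+3) : ℝ)
  set y2 := γ + θ * (ostq m (2*t+5) : ℝ)
  have hid : (m:ℝ) * γ = ((m:ℕ)+2 : ℕ) * y1 - y2 - y0 := by
    have h := ostq_identity hm t
    have hc : ((m+2 : ℕ) : ℝ) * (ostq m (2*t+3) : ℝ)
        = (ostq m (2*t+5) : ℝ) + (ostq m (2*t+1) : ℝ) := by
      push_cast
      exact_mod_cast congrArg (Nat.cast : ℕ → ℝ) h
    show (m:ℝ) * γ = ((m+2:ℕ) : ℝ) * y1 - y2 - y0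
    have : ((m+2:ℕ) : ℝ) = (m:ℝ) + 2 := by push_cast; ring
    rw [this] at hc ⊢
    simp only [y0, y1, y2]
    linear_combination (-θ) * hc
  rw [hid]
  set M := max (nint y0) (max (nint y1) (nint y2))
  have h0 : nint y0 ≤ M := le_max_left _ _
  have h1 : nint y1 ≤ M := le_trans (le_max_left _ _) (le_max_right _ _)
  have h2 : nint y2 ≤ M := le_trans (le_max_right _ _) (le_max_right _ _)
  have hM : 0 ≤ M := le_trans (nint_nonneg y0) h0
  calc nint (((m:ℕ)+2 : ℕ) * y1 - y2 - y0)
      ≤ nint (((m:ℕ)+2 : ℕ) * y1 - y2) + nint y0 := nint_sub_le _ _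
    _ ≤ nint (((m:ℕ)+2 : ℕ) * y1) + nint y2 + nint y0 := by
        have := nint_sub_le (((m:ℕ)+2 : ℕ) * y1 : ℝ) y2
        linarith
    _ ≤ ((m:ℝ)+2) * nint y1 + nint y2 + nint y0 := by
        have := nint_nsmul_le (m+2) y1
        push_cast at this ⊢
        linarith
    _ ≤ ((m:ℝ)+2) * M + M + M := by
        have hm2 : (0:ℝ) ≤ (m:ℝ)+2 := by positivity
        nlinarith
    _ = ((m:ℝ)+4) * M := by ring
/-! ### Contraction machinery -/

noncomputable def Uf (m : ℕ) (γ θ : ℝ) (k : ℕ) : ℝ := ‖T m γ θ k‖ / (ostq m k : ℝ)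

noncomputable def Vf (m : ℕ) (γ θ : ℝ) (k : ℕ) : ℝ := max (Uf m γ θ (k+1)) (Uf m γ θ k)

noncomputable def zeta (m : ℕ) (γ : ℝ) : ℝ := nint ((m:ℝ) * γ) / ((m:ℝ) + 4)

noncomputable def beta (m : ℕ) (γ : ℝ) : ℝ :=
  4 * zeta m γ ^ 2 / (((m:ℝ) + 1) * ((m:ℝ) + 1))

section Contraction

variable (γ θ : ℝ)

lemma Q_pos (k : ℕ) : (0:ℝ) < (ostq m k : ℝ) := by
  exact_mod_cast ostq_pos (m := m) k

lemma U_nonneg (k : ℕ) : 0 ≤ Uf m γ θ k :=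
  div_nonneg (norm_nonneg _) (le_of_lt (Q_pos k))

lemma U_le_one (k : ℕ) : Uf m γ θ k ≤ 1 :=
  (div_le_one (Q_pos k)).2 (norm_T_le k γ θ)

lemma r_eq_QU (k : ℕ) : ‖T m γ θ k‖ = (ostq m k : ℝ) * Uf m γ θ k := by
  rw [Uf, mul_div_cancel₀]
  exact ne_of_gt (Q_pos k)

lemma V_nonneg (k : ℕ) : 0 ≤ Vf m γ θ k :=
  le_trans (U_nonneg γ θ k) (le_max_right _ _)

lemma V_le_one (k : ℕ) : Vf m γ θ k ≤ 1 :=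
  max_le (U_le_one γ θ (k+1)) (U_le_one γ θ k)

lemma U_step (hm : 2 ≤ m) (k : ℕ) : Uf m γ θ (k+2) ≤ Vf m γ θ k := by
  rw [Uf, div_le_iff₀ (Q_pos (k+2))]
  have h1 := norm_T_rec hm γ θ k
  have h2 : ‖T m γ θ (k+1)‖ ≤ (ostq m (k+1) : ℝ) * Vf m γ θ k := by
    rw [r_eq_QU γ θ (k+1)]
    exact mul_le_mul_of_nonneg_left (le_max_left _ _) (le_of_lt (Q_pos (k+1)))
  have h3 : ‖T m γ θ k‖ ≤ (ostq m k : ℝ) * Vf m γ θ k := by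
    rw [r_eq_QU γ θ k]
    exact mul_le_mul_of_nonneg_left (le_max_right _ _) (le_of_lt (Q_pos k))
  have hQ : (ostq m (k+2) : ℝ) = (pq m (k+2) : ℝ) * (ostq m (k+1) : ℝ) + (ostq m k : ℝ) := by
    rw [ostq_rec (m := m) k]
    push_cast
    ring
  have hpq : (1:ℝ) ≤ (pq m (k+2) : ℝ) := by exact_mod_cast pq_pos hm (k+2)
  have hV := V_nonneg (m := m) γ θ k
  have hq1 := Q_pos (m := m) (k+1)
  nlinarith

lemma V_mono (hm : 2 ≤ m) (k : ℕ) : Vf m γ θ (k+1) ≤ Vf m γ θ k :=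
  max_le (U_step γ θ hm k) (le_max_left _ _)

lemma V_anti (hm : 2 ≤ m) {j k : ℕ} (h : j ≤ k) : Vf m γ θ k ≤ Vf m γ θ j := by
  induction k with
  | zero => simp_all
  | succ k ih =>
    rcases Nat.lt_or_ge j (k+1) with h' | h'
    · exact le_trans (V_mono γ θ hm k) (ih (by omega))
    · have : j = k+1 := by omega
      rw [this]

lemma zeta_nonneg : 0 ≤ zeta m γ :=
  div_nonneg (nint_nonneg _) (by positivity)

lemma zeta_pos (hγ : nint ((m:ℝ) * γ) ≠ 0) : 0 < zeta m γ := by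
  unfold zeta
  have h1 : 0 ≤ nint ((m:ℝ)*γ) := nint_nonneg _
  have h2 : (0:ℝ) < (m:ℝ) + 4 := by positivity
  exact div_pos (lt_of_le_of_ne h1 (Ne.symm hγ)) h2

lemma zeta_le (hm : 2 ≤ m) : zeta m γ ≤ 1/12 := by
  unfold zeta
  have h1 := nint_le_half ((m:ℝ)*γ)
  have h2 : (6:ℝ) ≤ (m:ℝ) + 4 := by
    have : (2:ℝ) ≤ (m:ℝ) := by exact_mod_cast hm
    linarith
  rw [div_le_iff₀ (by linarith : (0:ℝ) < (m:ℝ)+4)]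
  nlinarith [nint_nonneg ((m:ℝ)*γ)]

lemma beta_nonneg : 0 ≤ beta m γ := by
  unfold beta
  have := zeta_nonneg (m := m) (γ := γ)
  positivity

lemma beta_pos (hγ : nint ((m:ℝ) * γ) ≠ 0) : 0 < beta m γ := by
  unfold beta
  have := zeta_pos (m := m) γ hγ
  positivity

lemma beta_le (hm : 2 ≤ m) : beta m γ ≤ 1/2 := by
  unfold beta
  have h1 := zeta_le (m := m) γ hm
  have h0 := zeta_nonneg (m := m) (γ := γ)
  have hm1 : (2:ℝ) ≤ (m:ℝ) := by exact_mod_cast hm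
  rw [div_le_iff₀ (by nlinarith : (0:ℝ) < ((m:ℝ)+1)*((m:ℝ)+1))]
  nlinarith

lemma arith_pre (mR x ζ r0 r1 r2 : ℝ) (hr1 : 0 ≤ r1) (hζ0 : 0 ≤ ζ) (hx : ζ ≤ x)
    (h : r2 ≤ (mR - 4*x^2)*r1 + r0) : r2 ≤ (mR - 4*ζ^2)*r1 + r0 := by
  have hxx : ζ^2 ≤ x^2 := by nlinarith
  nlinarith [mul_le_mul_of_nonneg_right hxx hr1]

lemma arith_A (mR δ V Q0 Q1 Q2 r0 r1 r2 : ℝ)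
    (hm1 : 2 ≤ mR) (hδ0 : 0 ≤ δ) (hδ1 : δ ≤ 1/36) (hV0 : 0 ≤ V)
    (hq1 : 0 < Q1) (hr1 : 0 ≤ r1)
    (h2 : r1 ≤ Q1 * V) (h3 : r0 ≤ Q0 * V)
    (hrec : r2 ≤ (mR - δ) * r1 + r0)
    (hQeven : Q2 = mR * Q1 + Q0) (hQle : Q2 ≤ (mR+1) * Q1) :
    (mR+1) * r2 ≤ ((mR+1) - δ) * Q2 * V := by
  have hmd : (0:ℝ) ≤ mR - δ := by linarith
  have hstep : r2 ≤ (Q2 - δ * Q1) * V := by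
    have hmul := mul_le_mul_of_nonneg_left h2 hmd
    nlinarith
  have h := mul_le_mul_of_nonneg_left hstep (by linarith : (0:ℝ) ≤ mR+1)
  have hh := mul_le_mul_of_nonneg_left hQle (mul_nonneg hδ0 hV0)
  nlinarith

lemma arith_B (mR δ V Q1 Q2 Q3 r1 r2 r3 p3 : ℝ)
    (hm1 : 2 ≤ mR) (hδ0 : 0 ≤ δ) (hV0 : 0 ≤ V)
    (hq2 : 0 < Q2) (hr2 : 0 ≤ r2) (hr1 : 0 ≤ r1)
    (hp3 : 1 ≤ p3)
    (hA : (mR+1) * r2 ≤ ((mR+1) - δ) * Q2 * V)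
    (h2 : r1 ≤ Q1 * V)
    (hrec3 : r3 ≤ p3 * r2 + r1)
    (hQ3 : Q3 = p3 * Q2 + Q1) (hQle3 : Q3 ≤ (mR+1) * Q2) :
    ((mR+1)*(mR+1)) * r3 ≤ (((mR+1)*(mR+1)) - δ) * Q3 * V := by
  have hP0 : (0:ℝ) ≤ mR + 1 := by linarith
  have e1 : (mR+1) * r3 ≤ p3 * ((mR+1) * r2) + (mR+1) * r1 := by nlinarith
  have e2 : p3 * ((mR+1) * r2) ≤ p3 * (((mR+1) - δ) * Q2 * V) :=
    mul_le_mul_of_nonneg_left hA (by linarith)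
  have e3 : (mR+1) * r1 ≤ (mR+1) * (Q1 * V) := mul_le_mul_of_nonneg_left h2 hP0
  have e4 : (mR+1) * r3 ≤ (mR+1) * Q3 * V - δ * (p3 * Q2) * V := by
    have heq : p3 * (((mR+1) - δ) * Q2 * V) + (mR+1) * (Q1 * V)
        = (mR+1) * Q3 * V - δ * (p3 * Q2) * V := by rw [hQ3]; ring
    linarith
  have e5 : δ * Q2 * V ≤ δ * (p3 * Q2) * V := by
    nlinarith [mul_nonneg (mul_nonneg hδ0 (le_of_lt hq2)) hV0]
  have e6 : δ * Q3 * V ≤ (mR+1) * (δ * Q2 * V) := by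
    nlinarith [mul_le_mul_of_nonneg_left hQle3 (mul_nonneg hδ0 hV0)]
  have e7 : (mR+1) * ((mR+1) * r3) ≤ (mR+1) * ((mR+1) * Q3 * V - δ * (p3 * Q2) * V) :=
    mul_le_mul_of_nonneg_left e4 hP0
  have e8 : δ * Q3 * V ≤ (mR+1) * (δ * (p3 * Q2) * V) := by
    have := mul_le_mul_of_nonneg_left e5 hP0
    linarith
  nlinarith [e7, e8]

lemma arith_Ua (mR β δ V Q2 r2 : ℝ) (hm1 : 2 ≤ mR) (hβ0 : 0 ≤ β)
    (hβδ : β * ((mR+1)*(mR+1)) = δ) (hV0 : 0 ≤ V) (hq2 : 0 < Q2)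
    (hA : (mR+1) * r2 ≤ ((mR+1) - δ) * Q2 * V) : r2 ≤ (1-β) * V * Q2 := by
  have hQ2V : 0 ≤ Q2 * V := mul_nonneg (le_of_lt hq2) hV0
  have hb1 : (mR+1) * β ≤ δ := by
    nlinarith [mul_nonneg hβ0 (mul_nonneg (by linarith : (0:ℝ) ≤ mR) (by linarith : (0:ℝ) ≤ mR)),
      mul_nonneg hβ0 (by linarith : (0:ℝ) ≤ mR)]
  have hint := mul_le_mul_of_nonneg_right hb1 hQ2V
  have key : (mR+1) * r2 ≤ (mR+1) * ((1 - β) * V * Q2) := by nlinarith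
  exact le_of_mul_le_mul_left key (by linarith)

lemma arith_Ub (mR β δ V Q3 r3 : ℝ) (hm1 : 2 ≤ mR) (hβ0 : 0 ≤ β)
    (hβδ : β * ((mR+1)*(mR+1)) = δ) (hV0 : 0 ≤ V) (hq3 : 0 < Q3)
    (hB : ((mR+1)*(mR+1)) * r3 ≤ (((mR+1)*(mR+1)) - δ) * Q3 * V) : r3 ≤ (1-β) * V * Q3 := by
  have hQ3V : 0 ≤ Q3 * V := mul_nonneg (le_of_lt hq3) hV0
  have hint := congrArg (fun z => z * (Q3 * V)) hβδ
  have key : ((mR+1)*(mR+1)) * r3 ≤ ((mR+1)*(mR+1)) * ((1 - β) * V * Q3) := by nlinarith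
  exact le_of_mul_le_mul_left key (by nlinarith)

/-- The key contraction step at an even index with non-negligible `nint`. -/
lemma good_step (hm : 2 ≤ m) (k : ℕ) (hk : k % 2 = 0)
    (hx : zeta m γ ≤ nint (γ + θ * (ostq m (k+1) : ℝ))) :
    Vf m γ θ (k+2) ≤ (1 - beta m γ) * Vf m γ θ k := by
  have hζ0 : 0 ≤ zeta m γ := zeta_nonneg γ
  have hζ12 : zeta m γ ≤ 1/12 := zeta_le γ hm
  have hβ0 : 0 ≤ beta m γ := beta_nonneg γ
  have hm1 : (2:ℝ) ≤ (m:ℝ) := by exact_mod_cast hm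
  have hq0 := Q_pos (m := m) k
  have hq1 := Q_pos (m := m) (k+1)
  have hq2 := Q_pos (m := m) (k+2)
  have hq3 := Q_pos (m := m) (k+3)
  have hV0 : 0 ≤ Vf m γ θ k := V_nonneg γ θ k
  have h2 : ‖T m γ θ (k+1)‖ ≤ (ostq m (k+1) : ℝ) * Vf m γ θ k := by
    rw [r_eq_QU γ θ (k+1)]
    exact mul_le_mul_of_nonneg_left (le_max_left _ _) (le_of_lt hq1)
  have h3 : ‖T m γ θ k‖ ≤ (ostq m k : ℝ) * Vf m γ θ k := by
    rw [r_eq_QU γ θ k]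
    exact mul_le_mul_of_nonneg_left (le_max_right _ _) (le_of_lt hq0)
  have hQeven : (ostq m (k+2) : ℝ) = (m:ℝ) * (ostq m (k+1) : ℝ) + (ostq m k : ℝ) := by
    rw [ostq_rec (m := m) k, pq_even (by omega)]
    push_cast
    ring
  have hQle : (ostq m (k+2) : ℝ) ≤ ((m:ℝ)+1) * (ostq m (k+1) : ℝ) := by
    exact_mod_cast ostq_succ_le hm (k+1)
  have hQle3 : (ostq m (k+3) : ℝ) ≤ ((m:ℝ)+1) * (ostq m (k+2) : ℝ) := by
    exact_mod_cast ostq_succ_le hm (k+2)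
  have hrec0 := norm_T_rec_even hm γ θ k hk
  have hrec : ‖T m γ θ (k+2)‖
      ≤ ((m:ℝ) - 4 * zeta m γ ^ 2) * ‖T m γ θ (k+1)‖ + ‖T m γ θ k‖ :=
    arith_pre (m:ℝ) _ _ _ _ _ (norm_nonneg _) hζ0 hx hrec0
  have hrec3 : ‖T m γ θ (k+3)‖ ≤ (pq m (k+3) : ℝ) * ‖T m γ θ (k+2)‖ + ‖T m γ θ (k+1)‖ :=
    norm_T_rec hm γ θ (k+1)
  have hpq3 : (1:ℝ) ≤ (pq m (k+3) : ℝ) := by exact_mod_cast pq_pos hm (k+3)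
  have hQ3 : (ostq m (k+3) : ℝ) = (pq m (k+3) : ℝ) * (ostq m (k+2) : ℝ) + (ostq m (k+1) : ℝ) := by
    rw [ostq_rec (m := m) (k+1)]
    push_cast
    ring
  have hδ1 : 4 * zeta m γ ^ 2 ≤ 1/36 := by nlinarith
  have hδ0 : (0:ℝ) ≤ 4 * zeta m γ ^ 2 := by positivity
  have hβδ : beta m γ * (((m:ℝ)+1)*((m:ℝ)+1)) = 4 * zeta m γ ^ 2 := by
    unfold beta
    rw [div_mul_cancel₀]
    positivity
  have hA := arith_A (m:ℝ) (4 * zeta m γ ^ 2) (Vf m γ θ k) _ _ _ _ _ _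
    hm1 hδ0 hδ1 hV0 hq1 (norm_nonneg _) h2 h3 hrec hQeven hQle
  have hB := arith_B (m:ℝ) (4 * zeta m γ ^ 2) (Vf m γ θ k) _ _ _ _ _ _ _
    hm1 hδ0 hV0 hq2 (norm_nonneg _) (norm_nonneg _) hpq3 hA h2 hrec3 hQ3 hQle3
  have hUa : Uf m γ θ (k+2) ≤ (1 - beta m γ) * Vf m γ θ k := by
    rw [Uf, div_le_iff₀ hq2]
    exact arith_Ua (m:ℝ) (beta m γ) (4 * zeta m γ ^ 2) _ _ _ hm1 hβ0 hβδ hV0 hq2 hA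
  have hUb : Uf m γ θ (k+3) ≤ (1 - beta m γ) * Vf m γ θ k := by
    rw [Uf, div_le_iff₀ hq3]
    exact arith_Ub (m:ℝ) (beta m γ) (4 * zeta m γ ^ 2) _ _ _ hm1 hβ0 hβδ hV0 hq3 hB
  exact max_le hUb hUa

lemma window (hm : 2 ≤ m) (t : ℕ) :
    Vf m γ θ (2*t+6) ≤ (1 - beta m γ) * Vf m γ θ (2*t) := by
  have hρ0 : (0:ℝ) ≤ 1 - beta m γ := by linarith [beta_le (m := m) γ hm]
  have hζle : zeta m γ ≤ max (nint (γ + θ * (ostq m (2*t+1) : ℝ)))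
      (max (nint (γ + θ * (ostq m (2*t+3) : ℝ))) (nint (γ + θ * (ostq m (2*t+5) : ℝ)))) := by
    unfold zeta
    rw [div_le_iff₀ (by positivity : (0:ℝ) < (m:ℝ)+4)]
    nlinarith [dioph hm γ θ t]
  rcases le_max_iff.mp hζle with h | h
  · have hg := good_step γ θ hm (2*t) (by omega) h
    calc Vf m γ θ (2*t+6) ≤ Vf m γ θ (2*t+2) := V_anti γ θ hm (by omega)
      _ ≤ (1 - beta m γ) * Vf m γ θ (2*t) := hg
  · rcases le_max_iff.mp h with h' | h'
    · have hg := good_step γ θ hm (2*t+2) (by omega) (by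
        have : 2*t+2+1 = 2*t+3 := by omega
        rw [this]
        exact h')
      have h1 : 2*t+2+2 = 2*t+4 := by omega
      rw [h1] at hg
      calc Vf m γ θ (2*t+6) ≤ Vf m γ θ (2*t+4) := V_anti γ θ hm (by omega)
        _ ≤ (1 - beta m γ) * Vf m γ θ (2*t+2) := hg
        _ ≤ (1 - beta m γ) * Vf m γ θ (2*t) :=
            mul_le_mul_of_nonneg_left (V_anti γ θ hm (by omega)) hρ0
    · have hg := good_step γ θ hm (2*t+4) (by omega) (by
        have : 2*t+4+1 = 2*t+5 := by omega
        rw [this]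
        exact h')
      have h1 : 2*t+4+2 = 2*t+6 := by omega
      rw [h1] at hg
      calc Vf m γ θ (2*t+6) ≤ (1 - beta m γ) * Vf m γ θ (2*t+4) := hg
        _ ≤ (1 - beta m γ) * Vf m γ θ (2*t) :=
            mul_le_mul_of_nonneg_left (V_anti γ θ hm (by omega)) hρ0

lemma V_six (hm : 2 ≤ m) : ∀ s : ℕ, Vf m γ θ (6*s) ≤ (1 - beta m γ)^s := by
  have hρ0 : (0:ℝ) ≤ 1 - beta m γ := by linarith [beta_le (m := m) γ hm]
  intro s
  induction s with
  | zero =>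
    simpa using V_le_one (m := m) γ θ 0
  | succ s ih =>
    have h1 : 6*(s+1) = 2*(3*s)+6 := by ring
    have h2 : 2*(3*s) = 6*s := by ring
    rw [h1]
    calc Vf m γ θ (2*(3*s)+6) ≤ (1 - beta m γ) * Vf m γ θ (2*(3*s)) := window γ θ hm (3*s)
      _ ≤ (1 - beta m γ) * (1 - beta m γ)^s := by
          rw [h2]
          exact mul_le_mul_of_nonneg_left ih hρ0
      _ = (1 - beta m γ)^(s+1) := by rw [pow_succ]; ring

end Contraction
end Work
theorem stmt14 (m : ℕ) (hm : 2 ≤ m) (γ : ℝ) (hγ : nint ((m : ℝ) * γ) ≠ 0) :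
    ∃ c η : ℝ, 0 < c ∧ 0 < η ∧ ∀ θ : ℝ, ∀ k : ℕ, 2 ≤ k →
      ‖(1 / (ostq m k : ℂ)) *
          ∑ u ∈ Finset.range (ostq m k), e (γ * (Sfull m u : ℝ) + θ * (u : ℝ))‖ ≤
        η * Real.exp (-c * (k : ℝ)) := by
  set ρ := 1 - beta m γ with hρdef
  have hβ0 : 0 < beta m γ := beta_pos γ hγ
  have hβ2 : beta m γ ≤ 1/2 := beta_le γ hm
  have hρ0 : 0 < ρ := by rw [hρdef]; linarith
  have hρ1 : ρ < 1 := by rw [hρdef]; linarith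
  set c := -(Real.log ρ)/6 with hcdef
  have hlogρ : Real.log ρ < 0 := Real.log_neg hρ0 hρ1
  have hc : 0 < c := by rw [hcdef]; linarith
  refine ⟨c, Real.exp (7*c), hc, Real.exp_pos _, ?_⟩
  intro θ k hk
  -- identify the LHS with Uf
  have hTd : (∑ u ∈ Finset.range (ostq m k), e (γ * (Sfull m u : ℝ) + θ * (u : ℝ)))
      = T m γ θ k := rfl
  have hQpos : (0:ℝ) < (ostq m k : ℝ) := Q_pos k
  have hLHS : ‖(1 / (ostq m k : ℂ)) *
      ∑ u ∈ Finset.range (ostq m k), e (γ * (Sfull m u : ℝ) + θ * (u : ℝ))‖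
      = Uf m γ θ k := by
    rw [hTd, norm_mul, norm_div, norm_one, Complex.norm_natCast, Uf]
    ring
  rw [hLHS]
  -- deduce the bound
  set s := (k-2)/6 with hsdef
  have hU1 : Uf m γ θ k ≤ Vf m γ θ (k-2) := by
    have := U_step (m := m) γ θ hm (k-2)
    rwa [Nat.sub_add_cancel hk] at this
  have hU2 : Vf m γ θ (k-2) ≤ Vf m γ θ (6*s) := by
    apply V_anti γ θ hm
    rw [hsdef, Nat.mul_comm]
    exact Nat.div_mul_le_self (k-2) 6
  have hU3 : Vf m γ θ (6*s) ≤ ρ^s := V_six γ θ hm s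
  have hUb : Uf m γ θ k ≤ ρ^s := le_trans hU1 (le_trans hU2 hU3)
  -- numeric estimate: ρ^s ≤ exp(7c) * exp(-c k)
  have hmod : (k - 2) % 6 < 6 := Nat.mod_lt _ (by norm_num)
  have hdm := Nat.div_add_mod (k-2) 6
  have h6s : 6*s + 7 ≥ k := by omega
  have h6sR : ((k:ℝ) - 7)/6 ≤ (s:ℝ) := by
    have : (k:ℝ) ≤ 6*(s:ℝ) + 7 := by exact_mod_cast h6s
    linarith
  have hρs : ρ^s = Real.exp ((s:ℝ) * Real.log ρ) := by
    rw [Real.exp_nat_mul, Real.exp_log hρ0]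
  have hmono : (s:ℝ) * Real.log ρ ≤ (((k:ℝ) - 7)/6) * Real.log ρ :=
    mul_le_mul_of_nonpos_right h6sR (le_of_lt hlogρ)
  have hrhs : (((k:ℝ) - 7)/6) * Real.log ρ = -c * (k:ℝ) + 7*c := by
    rw [hcdef]; ring
  have final : ρ^s ≤ Real.exp (7*c) * Real.exp (-c * (k:ℝ)) := by
    rw [hρs, ← Real.exp_add]
    apply Real.exp_le_exp.2
    rw [hrhs] at hmono
    linarith
  exact le_trans hUb final
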